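/- (Claim 2.6, existential part.) There is an absolute constant c₀ > 0 such that for all positive integers B, t, t' with t' ≥ t ≥ 20 and 2^{B/2^t} ≥ c₀·B·(t' + log₂ B + 1), there exists a family H of functions from a set of size B·2^{t'} to a set of size B·2^t with |H| ≤ 2^{⌈33·B/2^t⌉}, such that for every subset S of the domain with |S| ≤ 4B there exists h ∈ H that is injective on S. -/

import Mathlib

set_option maxHeartbeats 1000000

open Finset Real

section aux

variable {α β : Type*} [Fintype α] [DecidableEq α] [Fintype β] [DecidableEq β]

noncomputable def injOnEquiv (S : Finset α) :
    {f : α → β // Set.InjOn f ↑S} ≃ ((↥S) ↪ β) × ((↥(Sᶜ)) → β) where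
  toFun f := (⟨fun x => f.1 x.1, fun x y hxy => Subtype.ext (f.2 x.2 y.2 hxy)⟩,
    fun x => f.1 x.1)
  invFun eg := ⟨fun a => if h : a ∈ S then eg.1 ⟨a, h⟩ else eg.2 ⟨a, Finset.mem_compl.2 h⟩,
    by
      intro a ha b hb hab
      simp only [Finset.mem_coe] at ha hb
      simp only [dif_pos ha, dif_pos hb] at hab
      exact congrArg Subtype.val (eg.1.injective hab)⟩
  left_inv f := by
    ext a
    by_cases h : a ∈ S <;> simp [h] <;> rfl
  right_inv eg := by
    refine Prod.ext ?_ ?_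
    · ext x
      simp [x.2]
    · ext x
      have := Finset.mem_compl.1 x.2
      simp [this]

theorem card_injOn (S : Finset α) :
    Fintype.card {f : α → β // Set.InjOn f ↑S} =
      (Fintype.card β).descFactorial S.card * (Fintype.card β) ^ (Fintype.card α - S.card) := by
  rw [Fintype.card_congr (injOnEquiv S), Fintype.card_prod, Fintype.card_embedding_eq,
    Fintype.card_fun, Fintype.card_coe, Fintype.card_coe, Finset.card_compl]

lemma one_sub_ge (x : ℝ) (h0 : 0 ≤ x) (h1 : x ≤ 1/2) :
    (2:ℝ) ^ (-(2*x)) ≤ 1 - x := by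
  have h4 : (2:ℝ) ^ (-(2*x)) = Real.exp ((1 - 2*x) * 0 + (2*x) * (-Real.log 2)) := by
    rw [Real.rpow_def_of_pos (by norm_num)]
    ring_nf
  rw [h4]
  have := convexOn_exp.2 (Set.mem_univ 0) (Set.mem_univ (-Real.log 2))
    (by linarith : (0:ℝ) ≤ 1 - 2*x) (by linarith : (0:ℝ) ≤ 2*x) (by ring)
  simp only [smul_eq_mul] at this
  calc Real.exp ((1 - 2*x) * 0 + (2*x) * (-Real.log 2))
      ≤ (1 - 2*x) * Real.exp 0 + (2*x) * Real.exp (-Real.log 2) := this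
    _ = 1 - x := by
        rw [Real.exp_zero, Real.exp_neg, Real.exp_log (by norm_num)]
        ring

lemma descFactorial_lb (m s : ℕ) (hs : s ≤ m) :
    ((m - s : ℕ) : ℝ) ^ s ≤ (m.descFactorial s : ℝ) := by
  rw [Nat.descFactorial_eq_prod_range]
  have h : ((m - s : ℕ) : ℝ) ^ s = ∏ _i ∈ Finset.range s, ((m - s : ℕ) : ℝ) := by
    rw [Finset.prod_const, Finset.card_range]
  rw [h, Nat.cast_prod]
  apply Finset.prod_le_prod
  · intro i _; positivity
  · intro i hi
    have hi' := Finset.mem_range.1 hi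
    have him : i ≤ m := le_trans (le_of_lt hi') hs
    have h1 : ((m - s : ℕ) : ℝ) = (m:ℝ) - s := by exact Nat.cast_sub hs
    have h2 : ((m - i : ℕ) : ℝ) = (m:ℝ) - i := by exact Nat.cast_sub him
    have h3 : (i:ℝ) ≤ s := by exact_mod_cast le_of_lt hi'
    rw [h1, h2]; linarith

end aux

theorem universe_reduction_family_exists :
    ∃ c₀ : ℝ, 0 < c₀ ∧
      ∀ B t t' : ℕ, 0 < B → 20 ≤ t → t ≤ t' →
        c₀ * B * ((t' : ℝ) + Real.logb 2 B + 1) ≤ (2 : ℝ) ^ ((B : ℝ) / 2 ^ t) →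
        ∃ H : Finset (Fin (B * 2 ^ t') → Fin (B * 2 ^ t)),
          H.card ≤ 2 ^ (⌈(33 * B : ℝ) / 2 ^ t⌉₊) ∧
          ∀ S : Finset (Fin (B * 2 ^ t')), S.card ≤ 4 * B →
            ∃ h ∈ H, Set.InjOn h ↑S := by
  classical
  refine ⟨10, by norm_num, ?_⟩
  intro B t t' hB ht htt' hyp
  set N := B * 2 ^ t' with hN
  set M := B * 2 ^ t with hM
  set k := 2 ^ (⌈(33 * B : ℝ) / 2 ^ t⌉₊) with hk
  have hMpos : 0 < M := by positivity
  have hNpos : 0 < N := by positivity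
  have hkpos : 0 < k := by positivity
  -- main claim: a good tuple exists
  have main : ∃ g : Fin k → (Fin N → Fin M), ∀ S : Finset (Fin N), S.card ≤ 4 * B →
      ∃ i, Set.InjOn (g i) ↑S := by
    by_contra hcon
    push_neg at hcon
    set T := M ^ N with hT
    have hTpos : 0 < T := by positivity
    set 𝒮 : Finset (Finset (Fin N)) := Finset.univ.filter (fun S => S.card ≤ 4 * B) with h𝒮
    set bad : Finset (Fin N) → Finset (Fin k → Fin N → Fin M) :=
      fun S => Finset.univ.filter (fun g => ∀ i, ¬ Set.InjOn (g i) ↑S) with hbad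
    have hcover : (Finset.univ : Finset (Fin k → Fin N → Fin M)) ⊆ 𝒮.biUnion bad := by
      intro g _
      obtain ⟨S, hS1, hS2⟩ := hcon g
      exact Finset.mem_biUnion.2 ⟨S, by simp [h𝒮, hS1], by simp [hbad, hS2]⟩
    -- the probability parameter
    set p : ℝ := (2:ℝ) ^ (-((32 * B : ℝ) / 2 ^ t)) with hp
    have hppos : 0 < p := Real.rpow_pos_of_pos (by norm_num) _
    have hple1 : p ≤ 1 := Real.rpow_le_one_of_one_le_of_nonpos (by norm_num)
      (by rw [neg_nonpos]; positivity)
    have h2t8 : (8:ℝ) ≤ 2 ^ t := by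
      calc (8:ℝ) = 2 ^ 3 := by norm_num
        _ ≤ 2 ^ t := by
            apply pow_le_pow_right₀ (by norm_num)
            omega
    have hMR : (M:ℝ) = (B:ℝ) * 2 ^ t := by rw [hM]; push_cast; ring
    -- fraction of injective-on-S functions
    have hbadcard : ∀ S ∈ 𝒮, ((bad S).card : ℝ) ≤ ((1 - p) * T) ^ k := by
      intro S hS
      have hs4 : S.card ≤ 4 * B := by
        simpa [h𝒮] using hS
      set s := S.card with hscard
      have hsN : s ≤ N := by
        have := Finset.card_le_univ S
        simpa using this
      have h4BM : 4 * B ≤ M := by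
        rw [hM]
        have : 4 ≤ 2 ^ t := by
          calc 4 = 2 ^ 2 := by norm_num
            _ ≤ 2 ^ t := Nat.pow_le_pow_right (by norm_num) (by omega)
        nlinarith
      have hsM : s ≤ M := le_trans hs4 h4BM
      -- count of injective-on-S functions
      set c : ℕ := Fintype.card {f : Fin N → Fin M // Set.InjOn f ↑S} with hc
      have hcval : c = M.descFactorial s * M ^ (N - s) := by
        rw [hc, card_injOn S, Fintype.card_fin, Fintype.card_fin]
      have hcleT : c ≤ T := by
        calc c ≤ Fintype.card (Fin N → Fin M) := Fintype.card_subtype_le _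
          _ = T := by rw [Fintype.card_fun, Fintype.card_fin, Fintype.card_fin]
      -- lower bound on c
      set x : ℝ := (4 * B : ℝ) / M with hx
      have hx0 : 0 ≤ x := by positivity
      have hx12 : x ≤ 1 / 2 := by
        rw [hx, div_le_div_iff₀ (by exact_mod_cast hMpos) (by norm_num)]
        rw [hMR]
        have hB1 : (1:ℝ) ≤ B := by exact_mod_cast hB
        nlinarith
      have hclb : p * T ≤ (c : ℝ) := by
        have h1 : ((M - s : ℕ) : ℝ) ^ s * (M:ℝ) ^ (N - s) ≤ (c : ℝ) := by
          rw [hcval]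
          push_cast
          exact mul_le_mul_of_nonneg_right (descFactorial_lb M s hsM) (by positivity)
        have h2 : ((1 - x) * M) ^ s ≤ ((M - s : ℕ) : ℝ) ^ s := by
          apply pow_le_pow_left₀
          · have : x * M = 4 * B := by
              rw [hx]; field_simp
            nlinarith [hx12, (by exact_mod_cast hMpos : (0:ℝ) < M)]
          · rw [Nat.cast_sub hsM]
            have hs4R : (s:ℝ) ≤ 4 * B := by exact_mod_cast hs4
            have : x * M = 4 * B := by rw [hx]; field_simp
            nlinarith
        have h3 : p ≤ (1 - x) ^ s := by
          have hpe : ((2:ℝ) ^ (-(2 * x))) ^ (4 * B) = p := by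
            rw [← Real.rpow_natCast ((2:ℝ) ^ (-(2*x))) (4*B), ← Real.rpow_mul (by norm_num), hp]
            congr 1
            rw [hx, hMR]
            have hBpos : (0:ℝ) < B := by exact_mod_cast hB
            push_cast
            field_simp
            ring
          calc p ≤ ((2:ℝ) ^ (-(2 * x))) ^ (4 * B) := le_of_eq hpe.symm
            _ ≤ (1 - x) ^ (4 * B) := by
                apply pow_le_pow_left₀ (by positivity)
                exact one_sub_ge x hx0 hx12
            _ ≤ (1 - x) ^ s := by
                apply pow_le_pow_of_le_one _ _ hs4
                · linarith
                · linarith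
        have h4 : p * T ≤ (1 - x) ^ s * (M:ℝ) ^ s * (M:ℝ) ^ (N - s) := by
          have hTR : (T:ℝ) = (M:ℝ) ^ s * (M:ℝ) ^ (N - s) := by
            rw [hT, ← pow_add, Nat.add_sub_cancel' hsN]
            push_cast
            ring
          rw [hTR, ← mul_assoc]
          apply mul_le_mul_of_nonneg_right _ (by positivity)
          apply mul_le_mul_of_nonneg_right h3 (by positivity)
        calc p * T ≤ (1 - x) ^ s * (M:ℝ) ^ s * (M:ℝ) ^ (N - s) := h4
          _ = ((1 - x) * M) ^ s * (M:ℝ) ^ (N - s) := by rw [mul_pow]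
          _ ≤ ((M - s : ℕ) : ℝ) ^ s * (M:ℝ) ^ (N - s) :=
              mul_le_mul_of_nonneg_right h2 (by positivity)
          _ ≤ (c : ℝ) := h1
      -- count bad tuples
      have hbadval : (bad S).card = (T - c) ^ k := by
        have e1 : (bad S).card = Fintype.card {g : Fin k → Fin N → Fin M //
            ∀ i, ¬ Set.InjOn (g i) ↑S} := (Fintype.card_subtype _).symm
        have e2 : {g : Fin k → Fin N → Fin M // ∀ i, ¬ Set.InjOn (g i) ↑S} ≃
            (Fin k → {f : Fin N → Fin M // ¬ Set.InjOn f ↑S}) :=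
          Equiv.subtypePiEquivPi (β := fun _ => Fin N → Fin M)
            (p := fun _ f => ¬ Set.InjOn f ↑S)
        rw [e1, Fintype.card_congr e2, Fintype.card_fun, Fintype.card_fin]
        congr 1
        rw [Fintype.card_subtype_compl, Fintype.card_fun, Fintype.card_fin, Fintype.card_fin,
          ← hc, ← hT]
      rw [hbadval]
      have hcast : (((T - c) ^ k : ℕ) : ℝ) = (((T - c : ℕ)) : ℝ) ^ k := by push_cast; ring
      rw [hcast]
      apply pow_le_pow_left₀ (by positivity)
      have hsub : ((T - c : ℕ) : ℝ) = (T:ℝ) - c := by exact Nat.cast_sub hcleT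
      rw [hsub]
      nlinarith [hclb]
    -- size of the family of small sets
    have h𝒮card : 𝒮.card ≤ (4 * B + 1) * N ^ (4 * B) := by
      have hsub : 𝒮 ⊆ (Finset.range (4 * B + 1)).biUnion
          (fun i => Finset.powersetCard i (Finset.univ : Finset (Fin N))) := by
        intro S hS
        have hcard : S.card ≤ 4 * B := by simpa [h𝒮] using hS
        exact Finset.mem_biUnion.2 ⟨S.card, Finset.mem_range.2 (by omega),
          Finset.mem_powersetCard_univ.2 rfl⟩
      calc 𝒮.card ≤ ((Finset.range (4 * B + 1)).biUnion
            (fun i => Finset.powersetCard i (Finset.univ : Finset (Fin N)))).card :=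
          Finset.card_le_card hsub
        _ ≤ ∑ i ∈ Finset.range (4 * B + 1),
              (Finset.powersetCard i (Finset.univ : Finset (Fin N))).card :=
          Finset.card_biUnion_le
        _ ≤ ∑ _i ∈ Finset.range (4 * B + 1), N ^ (4 * B) := by
            apply Finset.sum_le_sum
            intro i hi
            rw [Finset.card_powersetCard, Finset.card_univ, Fintype.card_fin]
            calc N.choose i ≤ N ^ i := Nat.choose_le_pow N i
              _ ≤ N ^ (4 * B) := Nat.pow_le_pow_right hNpos
                  (Nat.lt_succ_iff.mp (Finset.mem_range.1 hi))
        _ = (4 * B + 1) * N ^ (4 * B) := by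
            rw [Finset.sum_const, Finset.card_range, smul_eq_mul]
    -- union bound
    have hTk : ((T : ℝ)) ^ k ≤ (𝒮.card : ℝ) * ((1 - p) * T) ^ k := by
      have h1 : (Finset.univ : Finset (Fin k → Fin N → Fin M)).card ≤ ∑ S ∈ 𝒮, (bad S).card :=
        le_trans (Finset.card_le_card hcover) Finset.card_biUnion_le
      have h2 : (Finset.univ : Finset (Fin k → Fin N → Fin M)).card = T ^ k := by
        rw [Finset.card_univ, Fintype.card_fun, Fintype.card_fun, Fintype.card_fin,
          Fintype.card_fin, Fintype.card_fin, ← hT]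
      have h3 : ((T ^ k : ℕ) : ℝ) ≤ ∑ S ∈ 𝒮, ((bad S).card : ℝ) := by
        rw [← Nat.cast_sum]
        exact_mod_cast h2 ▸ h1
      calc ((T:ℝ)) ^ k = ((T ^ k : ℕ) : ℝ) := by push_cast; ring
        _ ≤ ∑ S ∈ 𝒮, ((bad S).card : ℝ) := h3
        _ ≤ ∑ S ∈ 𝒮, ((1 - p) * T) ^ k := Finset.sum_le_sum hbadcard
        _ = 𝒮.card * ((1 - p) * T) ^ k := by rw [Finset.sum_const, nsmul_eq_mul]
    -- numeric endgame
    have hBpos : (0:ℝ) < B := by exact_mod_cast hB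
    have hL0 : 0 ≤ Real.logb 2 B := Real.logb_nonneg (by norm_num) (by exact_mod_cast hB)
    have hpk : 10 * B * ((t' : ℝ) + Real.logb 2 B + 1) ≤ p * k := by
      have hk1 : (k : ℝ) = (2:ℝ) ^ ((⌈(33 * B : ℝ) / 2 ^ t⌉₊ : ℕ) : ℝ) := by
        rw [Real.rpow_natCast, hk]
        push_cast
        ring
      have hpk2 : p * k = (2:ℝ) ^ (-((32 * B : ℝ) / 2 ^ t) + (⌈(33 * B : ℝ) / 2 ^ t⌉₊ : ℝ)) := by
        rw [Real.rpow_add (by norm_num), hp, hk1]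
      rw [hpk2]
      calc 10 * (B:ℝ) * ((t' : ℝ) + Real.logb 2 B + 1) ≤ (2:ℝ) ^ ((B:ℝ) / 2 ^ t) := hyp
        _ ≤ (2:ℝ) ^ (-((32 * B : ℝ) / 2 ^ t) + (⌈(33 * B : ℝ) / 2 ^ t⌉₊ : ℝ)) := by
            apply Real.rpow_le_rpow_of_exponent_le (by norm_num)
            have hceil := Nat.le_ceil ((33 * B : ℝ) / 2 ^ t)
            have heq : (B:ℝ) / 2 ^ t = -((32 * B : ℝ) / 2 ^ t) + (33 * B : ℝ) / 2 ^ t := by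
              ring
            linarith
    have hexp2 : (1 - p) ^ k ≤ Real.exp (-(p * k)) := by
      calc (1 - p) ^ k ≤ (Real.exp (-p)) ^ k := by
            apply pow_le_pow_left₀ (by linarith)
            linarith [Real.add_one_le_exp (-p)]
        _ = Real.exp (-(p * k)) := by
            rw [← Real.exp_nat_mul]
            congr 1
            ring
    have hlogN : Real.log N = Real.logb 2 B * Real.log 2 + t' * Real.log 2 := by
      have hNR : (N:ℝ) = (B:ℝ) * 2 ^ t' := by rw [hN]; push_cast; ring
      rw [hNR, Real.log_mul (ne_of_gt hBpos) (by positivity), Real.log_pow]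
      congr 1
      rw [Real.logb]
      field_simp
    have hexp1 : ((4 * B + 1 : ℝ)) * (N:ℝ) ^ (4 * B) <
        Real.exp (10 * B * ((t' : ℝ) + Real.logb 2 B + 1)) := by
      have e1 : (4 * (B:ℝ) + 1) ≤ Real.exp (4 * B) := Real.add_one_le_exp (4 * (B:ℝ))
      have e2 : (N:ℝ) ^ (4 * B) = Real.exp (((4 * B : ℕ) : ℝ) * Real.log N) := by
        rw [Real.exp_nat_mul, Real.exp_log (by exact_mod_cast hNpos)]
      have e3 : (4 * (B:ℝ)) + ((4 * B : ℕ) : ℝ) * Real.log N <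
          10 * B * ((t' : ℝ) + Real.logb 2 B + 1) := by
        rw [hlogN]
        push_cast
        have hlt : Real.log 2 < 0.7 := by
          have := Real.log_two_lt_d9
          linarith
        have hl0 : 0 < Real.log 2 := Real.log_pos (by norm_num)
        have ht'0 : (0:ℝ) ≤ t' := by positivity
        nlinarith [mul_nonneg hBpos.le hL0, mul_nonneg hBpos.le ht'0,
          mul_nonneg (mul_nonneg hBpos.le hL0) (le_of_lt (sub_pos.2 hlt)),
          mul_nonneg (mul_nonneg hBpos.le ht'0) (le_of_lt (sub_pos.2 hlt))]
      calc (4 * (B:ℝ) + 1) * (N:ℝ) ^ (4 * B)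
          ≤ Real.exp (4 * B) * Real.exp (((4 * B : ℕ) : ℝ) * Real.log N) := by
            rw [← e2]
            exact mul_le_mul e1 (le_refl _) (by positivity) (by positivity)
        _ = Real.exp ((4 * (B:ℝ)) + ((4 * B : ℕ) : ℝ) * Real.log N) := (Real.exp_add _ _).symm
        _ < Real.exp (10 * B * ((t' : ℝ) + Real.logb 2 B + 1)) := Real.exp_lt_exp.2 e3
    have hfinal : (𝒮.card : ℝ) * (1 - p) ^ k < 1 := by
      have hc1 : (𝒮.card : ℝ) ≤ (4 * (B:ℝ) + 1) * (N:ℝ) ^ (4 * B) := by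
        exact_mod_cast h𝒮card
      calc (𝒮.card : ℝ) * (1 - p) ^ k
          ≤ ((4 * (B:ℝ) + 1) * (N:ℝ) ^ (4 * B)) * Real.exp (-(p * k)) :=
            mul_le_mul hc1 hexp2 (pow_nonneg (by linarith) k) (by positivity)
        _ ≤ ((4 * (B:ℝ) + 1) * (N:ℝ) ^ (4 * B)) *
              Real.exp (-(10 * B * ((t' : ℝ) + Real.logb 2 B + 1))) := by
            apply mul_le_mul_of_nonneg_left _ (by positivity)
            exact Real.exp_le_exp.2 (by linarith)
        _ < Real.exp (10 * B * ((t' : ℝ) + Real.logb 2 B + 1)) *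
              Real.exp (-(10 * B * ((t' : ℝ) + Real.logb 2 B + 1))) :=
            mul_lt_mul_of_pos_right hexp1 (Real.exp_pos _)
        _ = 1 := by
            rw [← Real.exp_add]
            simp
    have hTkpos : (0:ℝ) < (T:ℝ) ^ k := by positivity
    have hcontra : ((T:ℝ)) ^ k < ((T:ℝ)) ^ k := by
      calc ((T:ℝ)) ^ k ≤ (𝒮.card : ℝ) * ((1 - p) * T) ^ k := hTk
        _ = ((𝒮.card : ℝ) * (1 - p) ^ k) * (T:ℝ) ^ k := by rw [mul_pow]; ring
        _ < 1 * (T:ℝ) ^ k := mul_lt_mul_of_pos_right hfinal hTkpos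
        _ = (T:ℝ) ^ k := one_mul _
    exact lt_irrefl _ hcontra
  obtain ⟨g, hg⟩ := main
  refine ⟨Finset.image g Finset.univ, ?_, ?_⟩
  · calc (Finset.image g Finset.univ).card ≤ (Finset.univ : Finset (Fin k)).card :=
        Finset.card_image_le
      _ = k := by simp
  · intro S hS
    obtain ⟨i, hi⟩ := hg S hS
    exact ⟨g i, Finset.mem_image_of_mem g (Finset.mem_univ i), hi⟩
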